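/- Let γ̄ > 0 and θ > 0 with θ < γ̄, and let θ' satisfy θ ≤ θ' ≤ √(γ̄·θ/2) + θ/3. Then (1 + 2θ'/γ̄)·e^{-2θ'/γ̄} > e^{-θ/γ̄}; that is, the cooperative outage probability P_c = 1 - (1 + 2θ'/γ̄)·e^{-2θ'/γ̄} is strictly smaller than the non-cooperative outage probability P_nc = 1 - e^{-θ/γ̄}, so cooperation is beneficial. -/

import Mathlib

private lemma poly_pos (x : ℝ) : 0 < 1 + x + x^2/3 := by
  nlinarith [sq_nonneg (x + 3/2), sq_nonneg x]

private lemma key_lemma (s : ℝ) (hs : 0 < s) :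
    s - s^2/6 < Real.log (1 + s + s^2/3) := by
  set h : ℝ → ℝ := fun x => Real.log (1 + x + x^2/3) - x + x^2/6 with hh
  have hderiv : ∀ x : ℝ, HasDerivAt h ((1 + 2*x/3)/(1 + x + x^2/3) - 1 + x/3) x := by
    intro x
    have hP : HasDerivAt (fun x : ℝ => 1 + x + x^2/3) (1 + 2*x/3) x := by
      have hq : HasDerivAt (fun x : ℝ => x^2/3) (2*x/3) x := by
        have := (hasDerivAt_pow 2 x).div_const 3
        norm_num at this
        convert this using 1 <;> ring
      exact ((hasDerivAt_id x).const_add (1:ℝ)).add hq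
    have hlog : HasDerivAt (fun x : ℝ => Real.log (1 + x + x^2/3))
        ((1 + 2*x/3)/(1 + x + x^2/3)) x := hP.log (poly_pos x).ne'
    have hsq : HasDerivAt (fun x : ℝ => x^2/6) (x/3) x := by
      have := (hasDerivAt_pow 2 x).div_const 6
      norm_num at this
      rw [show x/3 = 2*x/6 by ring]; exact this
    exact (hlog.sub (hasDerivAt_id x)).add hsq
  have hmono : StrictMonoOn h (Set.Ici (0:ℝ)) := by
    apply strictMonoOn_of_deriv_pos (convex_Ici 0)
    · exact (Differentiable.continuous (fun x => (hderiv x).differentiableAt)).continuousOn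
    · intro x hx
      rw [interior_Ici] at hx
      rw [(hderiv x).deriv]
      have hP := poly_pos x
      have key : (1 - x/3) < (1 + 2*x/3)/(1 + x + x^2/3) := by
        rw [lt_div_iff₀ hP]
        nlinarith [pow_pos (Set.mem_Ioi.mp hx) 3]
      linarith
  have h0 : h 0 = 0 := by simp [hh]
  have := hmono Set.self_mem_Ici (Set.mem_Ici.mpr hs.le) hs
  rw [h0] at this
  simp only [hh] at this
  linarith

theorem cooperation_beneficial_region (γ θ θ' : ℝ) (hγ : 0 < γ) (hθ : 0 < θ)
    (hθγ : θ < γ) (h1 : θ ≤ θ') (h2 : θ' ≤ Real.sqrt (γ * θ / 2) + θ / 3) :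
    (1 + 2 * θ' / γ) * Real.exp (-(2 * θ' / γ)) > Real.exp (-(θ / γ)) := by
  set t : ℝ := θ / γ with ht
  set x : ℝ := 2 * θ' / γ with hx
  have htpos : 0 < t := div_pos hθ hγ
  have hxpos : 0 < x := by
    apply div_pos _ hγ
    linarith
  set s : ℝ := Real.sqrt (2 * t) with hs
  have hspos : 0 < s := Real.sqrt_pos.mpr (by linarith)
  have hs2 : s^2 = 2 * t := Real.sq_sqrt (by linarith)
  have hseq : Real.sqrt (γ * θ / 2) = γ * s / 2 := by
    rw [show γ * θ / 2 = (γ * s / 2)^2 by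
      have hr : (γ * s / 2)^2 = γ^2 * s^2 / 4 := by ring
      rw [hr, hs2, ht]
      field_simp
      ring]
    exact Real.sqrt_sq (by positivity)
  have hxu : x ≤ s + s^2/3 := by
    have hb : θ' ≤ γ * s / 2 + θ / 3 := by rw [← hseq]; exact h2
    rw [hx, div_le_iff₀ hγ, hs2]
    calc 2 * θ' ≤ γ * s + 2 * θ / 3 := by linarith
      _ = (s + 2 * t / 3) * γ := by rw [ht]; field_simp
  set u : ℝ := s + s^2/3 with hu
  have hupos : 0 < u := by positivity
  have h1x : (0:ℝ) < 1 + x := by linarith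
  have h1u : (0:ℝ) < 1 + u := by linarith
  have hlogdiff : Real.log (1 + u) - Real.log (1 + x) ≤ u - x := by
    have ha := Real.log_le_sub_one_of_pos (div_pos h1u h1x)
    rw [Real.log_div h1u.ne' h1x.ne'] at ha
    have hfrac : (1 + u) / (1 + x) - 1 = (u - x) / (1 + x) := by field_simp; ring
    rw [hfrac] at ha
    have hb : (u - x) / (1 + x) ≤ u - x := by
      rw [div_le_iff₀ h1x]
      nlinarith
    exact ha.trans hb
  have hkey : s - s^2/6 < Real.log (1 + u) := by
    have hk := key_lemma s hspos
    rwa [show (1:ℝ) + s + s^2/3 = 1 + u by rw [hu]; ring] at hk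
  have hmain : x - t < Real.log (1 + x) := by
    have hut : u - s^2/2 = s - s^2/6 := by rw [hu]; ring
    have hts : t = s^2/2 := by rw [hs2]; ring
    have hc : u - t < Real.log (1 + u) := by rw [hts, hut]; exact hkey
    linarith
  have hexp : Real.exp (x - t) < 1 + x := by
    calc Real.exp (x - t) < Real.exp (Real.log (1 + x)) := Real.exp_lt_exp.mpr hmain
      _ = 1 + x := Real.exp_log h1x
  have hepos : 0 < Real.exp (-x) := Real.exp_pos _
  have hfin := mul_lt_mul_of_pos_right hexp hepos
  rw [← Real.exp_add] at hfin
  have harg : x - t + -x = -t := by ring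
  rw [harg] at hfin
  exact hfin
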